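/- arXiv:1809.06816 — 2 statements merged into one kernel-verified Lean document; each statement's English description precedes it below -/
import Mathlib

section
/- The Sorgenfrey line contains no subspace homeomorphic to the Cantor set 2^ω. -/
open Set Topology

/-- The Sorgenfrey line: ℝ with the topology generated by half-open intervals [a,b). -/
def SorgenfreyLine : Type := ℝ

instance : TopologicalSpace SorgenfreyLine :=
  TopologicalSpace.generateFrom {s : Set ℝ | ∃ a b : ℝ, s = Set.Ico a b}

noncomputable instance : ConditionallyCompleteLinearOrder SorgenfreyLine :=
  inferInstanceAs (ConditionallyCompleteLinearOrder ℝ)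

noncomputable instance : Field SorgenfreyLine := inferInstanceAs (Field ℝ)

instance : IsStrictOrderedRing SorgenfreyLine := inferInstanceAs (IsStrictOrderedRing ℝ)

instance : Archimedean SorgenfreyLine := inferInstanceAs (Archimedean ℝ)

lemma SL.isOpen_Ico (a b : SorgenfreyLine) : IsOpen (Ico a b) :=
  TopologicalSpace.GenerateOpen.basic _ ⟨a, b, rfl⟩

lemma SL.isOpen_Ici (a : SorgenfreyLine) : IsOpen (Ici a) :=
  Set.iUnion_Ico_right a ▸ isOpen_iUnion (SL.isOpen_Ico a)

lemma SL.isOpen_Iio (b : SorgenfreyLine) : IsOpen (Iio b) :=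
  Set.iUnion_Ico_left b ▸ isOpen_iUnion (fun a => SL.isOpen_Ico a b)

lemma SL.isOpen_Ioi (a : SorgenfreyLine) : IsOpen (Ioi a) := by
  have : Ioi a = ⋃ b : {b : SorgenfreyLine // a < b}, Ici b.1 := by
    ext z
    simp only [mem_Ioi, mem_iUnion, mem_Ici]
    exact ⟨fun h => ⟨⟨z, h⟩, le_rfl⟩, fun ⟨b, hb⟩ => lt_of_lt_of_le b.2 hb⟩
  rw [this]
  exact isOpen_iUnion fun b => SL.isOpen_Ici b.1

lemma SL.isClosed_Iic (a : SorgenfreyLine) : IsClosed (Iic a) := by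
  rw [← isOpen_compl_iff, compl_Iic]
  exact SL.isOpen_Ioi a

/-- Every compact subset of the Sorgenfrey line is countable. -/
lemma SL.countable_of_isCompact {K : Set SorgenfreyLine} (hK : IsCompact K) : K.Countable := by
  have key : ∀ x ∈ K, ∃ q : ℚ, (q : SorgenfreyLine) < x ∧ ∀ z ∈ K, ¬((q : SorgenfreyLine) < z ∧ z < x) := by
    intro x hx
    have hC : IsCompact (K ∩ Iic x) := hK.inter_right (SL.isClosed_Iic x)
    -- cover by Iio y ∪ Ici x for y < x
    have hne : Nonempty {y : SorgenfreyLine // y < x} := ⟨⟨x - 1, sub_one_lt x⟩⟩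
    obtain ⟨⟨y, hy⟩, hcov⟩ := hC.elim_directed_cover
      (fun y : {y : SorgenfreyLine // y < x} => Iio y.1 ∪ Ici x)
      (fun y => (SL.isOpen_Iio y.1).union (SL.isOpen_Ici x))
      (by
        rintro z ⟨hzK, hzx⟩
        rcases eq_or_lt_of_le (mem_Iic.1 hzx) with h | h
        · exact mem_iUnion.2 ⟨Classical.arbitrary _, Or.inr (le_of_eq h.symm)⟩
        · obtain ⟨w, hzw, hwx⟩ := exists_between h
          exact mem_iUnion.2 ⟨⟨w, hwx⟩, Or.inl hzw⟩)
      (by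
        intro a b
        refine ⟨⟨max a.1 b.1, max_lt a.2 b.2⟩, ?_, ?_⟩
        · exact union_subset_union_left _ (Iio_subset_Iio (le_max_left _ _))
        · exact union_subset_union_left _ (Iio_subset_Iio (le_max_right _ _)))
    obtain ⟨q, hyq, hqx⟩ := exists_rat_btwn hy
    refine ⟨q, hqx, fun z hz ⟨hqz, hzx⟩ => ?_⟩
    have hz' : z ∈ K ∩ Iic x := ⟨hz, le_of_lt hzx⟩
    rcases hcov hz' with h | h
    · exact absurd (lt_trans hyq hqz) (not_lt.2 (le_of_lt h))
    · exact absurd hzx (not_lt.2 h)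
  -- build an injection into ℚ
  classical
  choose! f hf1 hf2 using key
  rw [Set.countable_iff_exists_injOn]
  refine ⟨fun x => (Denumerable.eqv ℚ) (f x), fun x hx y hy hxy => ?_⟩
  have hfxy : f x = f y := (Denumerable.eqv ℚ).injective hxy
  by_contra hne
  rcases lt_or_gt_of_ne hne with h | h
  · -- x < y : then x ≤ f y, but f x < x
    have hxle : x ≤ (f y : SorgenfreyLine) := by
      by_contra hlt
      exact hf2 y hy x hx ⟨not_le.1 hlt, h⟩
    have := hf1 x hx
    rw [hfxy] at this
    exact absurd this (not_lt.2 hxle)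
  · have hyle : y ≤ (f x : SorgenfreyLine) := by
      by_contra hlt
      exact hf2 x hx y hy ⟨not_le.1 hlt, h⟩
    have := hf1 y hy
    rw [← hfxy] at this
    exact absurd this (not_lt.2 hyle)

lemma not_countable_cantor : ¬ Countable (ℕ → Bool) := by
  intro h
  classical
  obtain ⟨g, hg⟩ := (by exact h : Countable (ℕ → Bool)).exists_injective_nat'
  have hinj : Function.Injective (fun s : Set ℕ => g (fun n => decide (n ∈ s))) := by
    intro s t hst
    have := hg hst
    ext n
    have h2 := congrFun this n
    simpa using (decide_eq_decide.1 h2)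
  exact Function.cantor_injective _ hinj

theorem sorgenfrey_no_cantor_subspace :
    ∀ S : Set SorgenfreyLine, ¬ Nonempty ((ℕ → Bool) ≃ₜ S) := by
  rintro S ⟨e⟩
  have : CompactSpace S := e.compactSpace
  have hK : IsCompact S := isCompact_iff_compactSpace.mpr this
  have hc : S.Countable := SL.countable_of_isCompact hK
  have : Countable S := hc.to_subtype
  exact not_countable_cantor (Countable.of_equiv _ e.toEquiv.symm)
end

section
/- The product 𝔸 × (ω+1) of the double arrow space with a convergent sequence is not homeomorphic to 𝔸, and consequently 𝔸 contains no subspace homeomorphic to 𝔸 × (ω+1). -/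
open Set Topology

def DoubleArrow : Type :=
  {p : ℝ ×ₗ Bool // ((ofLex p).2 = false ∧ (ofLex p).1 ∈ Set.Ioc (0:ℝ) 1) ∨
    ((ofLex p).2 = true ∧ (ofLex p).1 ∈ Set.Ico (0:ℝ) 1)}

noncomputable instance : LinearOrder DoubleArrow := Subtype.instLinearOrder _
noncomputable instance : TopologicalSpace DoubleArrow := Preorder.topology DoubleArrow
instance : OrderTopology DoubleArrow := ⟨rfl⟩

namespace DA

/-- first (real) coordinate of a point of the double arrow -/
def pi (p : DoubleArrow) : ℝ := (ofLex p.val).1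

/-- second (Boolean) coordinate of a point of the double arrow -/
def bo (p : DoubleArrow) : Bool := (ofLex p.val).2

lemma lt_iff {p q : DoubleArrow} : p < q ↔ pi p < pi q ∨ (pi p = pi q ∧ bo p < bo q) := by
  change p.val < q.val ↔ _
  exact Prod.Lex.lt_iff

lemma ext' {p q : DoubleArrow} (h1 : pi p = pi q) (h2 : bo p = bo q) : p = q :=
  Subtype.ext (show ofLex p.val = ofLex q.val from Prod.ext h1 h2)

lemma bounds (p : DoubleArrow) : 0 ≤ pi p ∧ pi p ≤ 1 := by
  rcases p.property with ⟨_, h⟩ | ⟨_, h⟩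
  · exact ⟨le_of_lt h.1, h.2⟩
  · exact ⟨h.1, le_of_lt h.2⟩

/-- constructor for points of the double arrow -/
def mk' (t : ℝ) (b : Bool) (h : if b then t ∈ Set.Ico (0:ℝ) 1 else t ∈ Set.Ioc (0:ℝ) 1) :
    DoubleArrow :=
  ⟨toLex (t, b), by cases b with
    | false => exact Or.inl ⟨rfl, by simpa using h⟩
    | true => exact Or.inr ⟨rfl, by simpa using h⟩⟩

@[simp] lemma pi_mk' {t b h} : pi (mk' t b h) = t := rfl
@[simp] lemma bo_mk' {t b h} : bo (mk' t b h) = b := rfl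

/-- the projection onto the real coordinate is continuous -/
lemma continuous_pi : Continuous pi := by
  have key : ∀ s ∈ {s : Set ℝ | ∃ a, s = Ioi a ∨ s = Iio a}, IsOpen (pi ⁻¹' s) := by
    rintro s ⟨a, rfl | rfl⟩
    · rcases lt_or_ge a 0 with ha | ha
      · have : pi ⁻¹' Ioi a = univ := eq_univ_of_forall fun p => lt_of_lt_of_le ha (bounds p).1
        rw [this]; exact isOpen_univ
      rcases lt_or_ge a 1 with ha1 | ha1
      · have : pi ⁻¹' Ioi a = Ioi (mk' a true (by simp [ha, ha1])) := by
          ext p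
          simp only [mem_preimage, mem_Ioi, lt_iff, pi_mk', bo_mk']
          constructor
          · intro h; exact Or.inl h
          · rintro (h | ⟨h, hb⟩)
            · exact h
            · exact absurd hb (by simp [Bool.lt_iff])
        rw [this]; exact isOpen_Ioi
      · have : pi ⁻¹' Ioi a = ∅ := by
          ext p; simp only [mem_preimage, mem_Ioi, mem_empty_iff_false, iff_false, not_lt]
          exact le_trans (bounds p).2 ha1
        rw [this]; exact isOpen_empty
    · rcases le_or_gt a 0 with ha | ha
      · have : pi ⁻¹' Iio a = ∅ := by
          ext p; simp only [mem_preimage, mem_Iio, mem_empty_iff_false, iff_false, not_lt]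
          exact le_trans ha (bounds p).1
        rw [this]; exact isOpen_empty
      rcases le_or_gt a 1 with ha1 | ha1
      · have : pi ⁻¹' Iio a = Iio (mk' a false (by simp [ha, ha1])) := by
          ext p
          simp only [mem_preimage, mem_Iio, lt_iff, pi_mk', bo_mk']
          constructor
          · intro h; exact Or.inl h
          · rintro (h | ⟨h, hb⟩)
            · exact h
            · exact absurd hb (by simp [Bool.lt_iff])
        rw [this]; exact isOpen_Iio
      · have : pi ⁻¹' Iio a = univ := eq_univ_of_forall fun p =>
          lt_of_le_of_lt (bounds p).2 ha1
        rw [this]; exact isOpen_univ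
  have : Continuous[_, TopologicalSpace.generateFrom {s : Set ℝ | ∃ a, s = Ioi a ∨ s = Iio a}] pi :=
    continuous_generateFrom_iff.mpr key
  rw [OrderTopology.topology_eq_generate_intervals (α := ℝ)]; exact this

/-- the "minus" arrow at t, for t ∈ (0,1); junk value otherwise -/
noncomputable def am (t : ℝ) : DoubleArrow :=
  if h : t ∈ Ioo (0:ℝ) 1 then mk' t false (by simp [h.1, le_of_lt h.2]) else
    mk' 1 false (by norm_num)

/-- the "plus" arrow at t, for t ∈ (0,1); junk value otherwise -/
noncomputable def ap (t : ℝ) : DoubleArrow :=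
  if h : t ∈ Ioo (0:ℝ) 1 then mk' t true (by simp [le_of_lt h.1, h.2]) else
    mk' 0 true (by norm_num)

lemma pi_am {t : ℝ} (h : t ∈ Ioo (0:ℝ) 1) : pi (am t) = t := by simp [am, h]
lemma pi_ap {t : ℝ} (h : t ∈ Ioo (0:ℝ) 1) : pi (ap t) = t := by simp [ap, h]
lemma bo_am {t : ℝ} (h : t ∈ Ioo (0:ℝ) 1) : bo (am t) = false := by simp [am, h]
lemma bo_ap {t : ℝ} (h : t ∈ Ioo (0:ℝ) 1) : bo (ap t) = true := by simp [ap, h]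

/-- A continuous real-valued function on the double arrow takes the same value at the two
arrows `t⁻`, `t⁺` for all but countably many `t ∈ (0,1)`. -/
lemma countable_split (g : DoubleArrow → ℝ) (hg : Continuous g) :
    {t : ℝ | t ∈ Ioo (0:ℝ) 1 ∧ g (am t) ≠ g (ap t)}.Countable := by
  set D := fun k : ℕ => {t : ℝ | t ∈ Ioo (0:ℝ) 1 ∧ 1/((k:ℝ)+1) < dist (g (am t)) (g (ap t))}
    with hD
  have hsub : {t : ℝ | t ∈ Ioo (0:ℝ) 1 ∧ g (am t) ≠ g (ap t)} ⊆ ⋃ k, D k := by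
    intro t ⟨ht, hne⟩
    have hpos : 0 < dist (g (am t)) (g (ap t)) := dist_pos.mpr hne
    obtain ⟨k, hk⟩ := exists_nat_one_div_lt hpos
    exact mem_iUnion.mpr ⟨k, ht, hk⟩
  refine Set.Countable.mono hsub (countable_iUnion fun k => ?_)
  set ε : ℝ := 1/(3*((k:ℝ)+1)) with hε
  have hεpos : 0 < ε := by positivity
  have key : ∀ t ∈ D k, ∃ q : ℚ, (q:ℝ) < t ∧
      ∀ v : DoubleArrow, (q:ℝ) < pi v → v ≤ am t → dist (g v) (g (am t)) < ε := by
    intro t ⟨ht, _⟩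
    have hs : g ⁻¹' Metric.ball (g (am t)) ε ∈ 𝓝 (am t) :=
      hg.continuousAt.preimage_mem_nhds (Metric.ball_mem_nhds _ hεpos)
    have hbot : ∃ l, l < am t := by
      refine ⟨mk' 0 true (by norm_num), lt_iff.mpr (Or.inl ?_)⟩
      rw [pi_am ht]; simpa using ht.1
    obtain ⟨l, hl, hIoc⟩ := exists_Ioc_subset_of_mem_nhds hs hbot
    have hlt : pi l < t := by
      rcases lt_iff.mp hl with h | ⟨_, h⟩
      · rwa [pi_am ht] at h
      · rw [bo_am ht] at h; exact absurd h (by simp [Bool.lt_iff])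
    obtain ⟨q, hq1, hq2⟩ := exists_rat_btwn hlt
    refine ⟨q, hq2, fun v hv1 hv2 => ?_⟩
    have : v ∈ Ioc l (am t) := ⟨lt_iff.mpr (Or.inl (lt_trans hq1 hv1)), hv2⟩
    exact Metric.mem_ball.mp (hIoc this)
  choose! f hf1 hf2 using key
  have main : ∀ t ∈ D k, ∀ t' ∈ D k, t < t' → f t ≠ f t' := by
    intro t ht t' ht' hlt heq
    have ht1 : t ∈ Ioo (0:ℝ) 1 := ht.1
    have ht'1 : t' ∈ Ioo (0:ℝ) 1 := ht'.1
    have h1 : dist (g (am t)) (g (am t')) < ε := by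
      refine hf2 t' ht' (am t) ?_ ?_
      · rw [pi_am ht1, ← heq]; exact hf1 t ht
      · exact le_of_lt (lt_iff.mpr (Or.inl (by rw [pi_am ht1, pi_am ht'1]; exact hlt)))
    have h2 : dist (g (ap t)) (g (am t')) < ε := by
      refine hf2 t' ht' (ap t) ?_ ?_
      · rw [pi_ap ht1, ← heq]; exact hf1 t ht
      · exact le_of_lt (lt_iff.mpr (Or.inl (by rw [pi_ap ht1, pi_am ht'1]; exact hlt)))
    have hd : dist (g (am t)) (g (ap t)) < 2*ε := by
      calc dist (g (am t)) (g (ap t))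
          ≤ dist (g (am t)) (g (am t')) + dist (g (am t')) (g (ap t)) := dist_triangle _ _ _
        _ < ε + ε := by rw [dist_comm (g (am t'))]; exact add_lt_add h1 h2
        _ = 2*ε := by ring
    have hcon : 1/((k:ℝ)+1) < 2*ε := lt_trans ht.2 hd
    rw [hε] at hcon
    rw [div_lt_iff₀ (by positivity)] at hcon
    have h23 : 2 * (1 / (3 * ((k:ℝ) + 1))) * ((k:ℝ) + 1) = 2/3 := by
      field_simp
    rw [h23] at hcon
    norm_num at hcon
  have hinj : Function.Injective (fun t : D k => f t.val) := by
    rintro ⟨a, ha⟩ ⟨b, hb⟩ h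
    simp only at h
    rcases lt_trichotomy a b with hab | hab | hab
    · exact absurd h (main a ha b hb hab)
    · exact Subtype.ext hab
    · exact absurd h.symm (main b hb a ha hab)
  exact Set.countable_coe_iff.mp hinj.countable

lemma tendsto_infty {h : DoubleArrow × OnePoint ℕ → DoubleArrow} (hc : Continuous h)
    (w : DoubleArrow) :
    Filter.Tendsto (fun n : ℕ => h (w, (n : OnePoint ℕ))) Filter.atTop
      (𝓝 (h (w, OnePoint.infty))) := by
  have t1 : Filter.Tendsto ((↑) : ℕ → OnePoint ℕ) Filter.atTop (𝓝 (OnePoint.infty)) := by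
    have := OnePoint.tendsto_coe_infty (X := ℕ)
    rwa [Filter.coclosedCompact_eq_cocompact, cocompact_eq_atTop] at this
  have t2 : Filter.Tendsto (fun n : ℕ => ((w, (n : OnePoint ℕ)) : DoubleArrow × OnePoint ℕ))
      Filter.atTop (𝓝 (w, OnePoint.infty)) :=
    Filter.Tendsto.prodMk_nhds tendsto_const_nhds t1
  exact (hc.tendsto _).comp t2

/-- Core argument: if `h` is continuous and injective, the two arrow points above `w₁`, `w₂`
cannot land on the pair of arrows over a common real number in the "wrong" interleaving. -/
lemma core {h : DoubleArrow × OnePoint ℕ → DoubleArrow} (hc : Continuous h)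
    (hi : Function.Injective h) (w₁ w₂ : DoubleArrow)
    (hP : bo (h (w₁, OnePoint.infty)) = true) (hQ : bo (h (w₂, OnePoint.infty)) = false)
    (hpi : ∀ n : OnePoint ℕ, pi (h (w₁, n)) = pi (h (w₂, n))) : False := by
  set P := h (w₁, OnePoint.infty) with hPdef
  set Q := h (w₂, OnePoint.infty) with hQdef
  have hQP : Q < P := by
    refine lt_iff.mpr (Or.inr ⟨(hpi OnePoint.infty).symm, ?_⟩)
    rw [hP, hQ]; exact Bool.lt_iff.mpr ⟨rfl, rfl⟩
  have ev1 : ∀ᶠ n : ℕ in Filter.atTop, h (w₁, (n : OnePoint ℕ)) ∈ Ioi Q :=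
    (tendsto_infty hc w₁).eventually_mem (isOpen_Ioi.mem_nhds hQP)
  have ev2 : ∀ᶠ n : ℕ in Filter.atTop, h (w₂, (n : OnePoint ℕ)) ∈ Iio P :=
    (tendsto_infty hc w₂).eventually_mem (isOpen_Iio.mem_nhds hQP)
  obtain ⟨n, hn1, hn2⟩ := (ev1.and ev2).exists
  have hy1 : pi Q < pi (h (w₁, (n : OnePoint ℕ))) := by
    rcases lt_iff.mp hn1 with hlt | ⟨heq, hblt⟩
    · exact hlt
    · exfalso
      have hbv : bo (h (w₁, (n : OnePoint ℕ))) = true := by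
        rw [hQ] at hblt
        exact (Bool.lt_iff.mp hblt).2
      have : h (w₁, (n : OnePoint ℕ)) = P := by
        apply ext'
        · rw [← heq, hpi OnePoint.infty]
        · rw [hbv, hP]
      have := hi this
      exact OnePoint.coe_ne_infty n (congrArg Prod.snd this)
  have hy2 : pi (h (w₂, (n : OnePoint ℕ))) < pi P := by
    rcases lt_iff.mp hn2 with hlt | ⟨heq, hblt⟩
    · exact hlt
    · exfalso
      have hbv : bo (h (w₂, (n : OnePoint ℕ))) = false := by
        rw [hP] at hblt
        rcases Bool.eq_false_or_eq_true (bo (h (w₂, (n : OnePoint ℕ)))) with hb | hb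
        · rw [hb] at hblt; exact absurd hblt (lt_irrefl true)
        · exact hb
      have : h (w₂, (n : OnePoint ℕ)) = Q := by
        apply ext'
        · rw [heq, ← hpi OnePoint.infty]
        · rw [hbv, hQ]
      have := hi this
      exact OnePoint.coe_ne_infty n (congrArg Prod.snd this)
  have hPQpi : pi Q = pi P := (hpi OnePoint.infty).symm
  have := hpi (n : OnePoint ℕ)
  rw [this] at hy1
  rw [← hPQpi] at hy2
  exact absurd (lt_trans hy1 hy2) (lt_irrefl _)

/-- Main lemma: there is no continuous injection of `𝔸 × (ω+1)` into `𝔸`. -/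
lemma no_continuous_injection (h : DoubleArrow × OnePoint ℕ → DoubleArrow)
    (hc : Continuous h) (hi : Function.Injective h) : False := by
  haveI : Countable (OnePoint ℕ) := inferInstanceAs (Countable (Option ℕ))
  set Dbad : Set ℝ := ⋃ n : OnePoint ℕ,
    {t : ℝ | t ∈ Ioo (0:ℝ) 1 ∧ pi (h (am t, n)) ≠ pi (h (ap t, n))} with hDbad
  have hcnt : Dbad.Countable := by
    refine countable_iUnion fun n => ?_
    exact countable_split (fun p => pi (h (p, n)))
      (continuous_pi.comp (hc.comp (continuous_id.prodMk continuous_const)))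
  have hIoo : ¬ (Ioo (0:ℝ) 1).Countable := by
    intro hcnt'
    have := hcnt'.measure_zero MeasureTheory.volume
    rw [Real.volume_Ioo] at this
    norm_num at this
  have hne : (Ioo (0:ℝ) 1 \ Dbad).Nonempty := by
    by_contra hemp
    rw [not_nonempty_iff_eq_empty, diff_eq_empty] at hemp
    exact hIoo (hcnt.mono hemp)
  obtain ⟨x, hx, hxD⟩ := hne
  have hxall : ∀ n : OnePoint ℕ, pi (h (am x, n)) = pi (h (ap x, n)) := by
    intro n
    by_contra hne'
    exact hxD (mem_iUnion.mpr ⟨n, hx, hne'⟩)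
  have hne'' : h (am x, OnePoint.infty) ≠ h (ap x, OnePoint.infty) := by
    intro heq
    have := hi heq
    have : am x = ap x := congrArg Prod.fst this
    have : bo (am x) = bo (ap x) := congrArg bo this
    rw [bo_am hx, bo_ap hx] at this
    exact Bool.false_ne_true this
  have hbo : bo (h (am x, OnePoint.infty)) ≠ bo (h (ap x, OnePoint.infty)) := by
    intro heq
    exact hne'' (ext' (hxall OnePoint.infty) heq)
  rcases Bool.eq_false_or_eq_true (bo (h (am x, OnePoint.infty))) with hb | hb
  · -- h(am x, ∞) is a plus arrow, h(ap x, ∞) is a minus arrow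
    have hb2 : bo (h (ap x, OnePoint.infty)) = false := by
      rcases Bool.eq_false_or_eq_true (bo (h (ap x, OnePoint.infty))) with hb' | hb'
      · exact absurd (hb.trans hb'.symm) hbo
      · exact hb'
    exact core hc hi (am x) (ap x) hb hb2 hxall
  · have hb2 : bo (h (ap x, OnePoint.infty)) = true := by
      rcases Bool.eq_false_or_eq_true (bo (h (ap x, OnePoint.infty))) with hb' | hb'
      · exact hb'
      · exact absurd (hb.trans hb'.symm) hbo
    exact core hc hi (ap x) (am x) hb2 hb (fun n => (hxall n).symm)

end DA

theorem doubleArrow_times_convergent_sequence :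
    (¬ Nonempty ((DoubleArrow × OnePoint ℕ) ≃ₜ DoubleArrow)) ∧
    (∀ S : Set DoubleArrow, ¬ Nonempty ((DoubleArrow × OnePoint ℕ) ≃ₜ S)) := by
  constructor
  · rintro ⟨e⟩
    exact DA.no_continuous_injection e e.continuous e.injective
  · rintro S ⟨e⟩
    exact DA.no_continuous_injection (fun p => (e p : DoubleArrow))
      (continuous_subtype_val.comp e.continuous)
      (Subtype.val_injective.comp e.injective)
end
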